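/- In the two-way crossed model with interaction, define for each row index i the linear EBLUP-error term T_i = γ̄_{i·} − g^{-1}Σ_{s=1}^g Ĥ^{(a)}_{is}·α_s. Then for all 1 ≤ i, i' ≤ g, Cov(T_i, T_{i'}) = 𝟙{i = i'}·σγ²/h + (σα²/g)·Ĥ^{(a)}_{ii'}. In particular Var(T_i) = σγ²/h + (σα²/g)·Ĥ^{(a)}_{ii}, which is the paper's mean-squared-error approximation MSE_LSW(α̂_i). -/

import Mathlib

open Matrix MeasureTheory ProbabilityTheory BigOperators

/-- Covariance `Cov(X,Y) = E[XY] − E[X]E[Y]` of two real random variables. -/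
noncomputable def Cov {Ω : Type*} [MeasureSpace Ω] (X Y : Ω → ℝ) : ℝ :=
  (∫ ω, X ω * Y ω) - (∫ ω, X ω) * (∫ ω, Y ω)

/-- Centered covariate `x_{s(c)} = x_s − x̄` where `x̄ = g⁻¹ Σ_s x_s`. -/
noncomputable def xc (g p : ℕ) (x : Fin g → Fin p → ℝ) (s : Fin g) : Fin p → ℝ :=
  x s - (g : ℝ)⁻¹ • ∑ u : Fin g, x u

/-- `D̂ = g⁻¹ Σ_s x_{s(c)} x_{s(c)}ᵀ`. -/
noncomputable def Dhat (g p : ℕ) (x : Fin g → Fin p → ℝ) : Matrix (Fin p) (Fin p) ℝ :=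
  (g : ℝ)⁻¹ • ∑ s : Fin g, vecMulVec (xc g p x s) (xc g p x s)

/-- `Ĥ^{(a)}_{su} = 1 + x_{s(c)}ᵀ D̂⁻¹ x_{u(c)}`. -/
noncomputable def Hhat (g p : ℕ) (x : Fin g → Fin p → ℝ) (s u : Fin g) : ℝ :=
  1 + xc g p x s ⬝ᵥ ((Dhat g p x)⁻¹ *ᵥ xc g p x u)

section helpers
variable {n ι : Type*} [Fintype n] [Fintype ι]

lemma sum_dotProduct' (a : n → ℝ) (f : ι → n → ℝ) :
    ∑ s : ι, a ⬝ᵥ f s = a ⬝ᵥ ∑ s : ι, f s := by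
  simp only [dotProduct, Finset.sum_apply, Finset.mul_sum]
  exact Finset.sum_comm

lemma dot_vecMulVec_mulVec (a b u u' : n → ℝ) :
    u ⬝ᵥ (vecMulVec a b *ᵥ u') = (u ⬝ᵥ a) * (b ⬝ᵥ u') := by
  simp only [Matrix.vecMulVec, Matrix.mulVec, dotProduct, Matrix.of_apply,
    Finset.mul_sum, Finset.sum_mul]
  rw [Finset.sum_comm]
  apply Finset.sum_congr rfl; intro i _
  apply Finset.sum_congr rfl; intro j _
  ring

omit [Fintype n] in
lemma vecMulVec_transpose' (a b : n → ℝ) : (vecMulVec a b)ᵀ = vecMulVec b a := by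
  ext i j; simp [Matrix.vecMulVec_apply, mul_comm]

lemma vecMul_eq_mulVec {A : Matrix n n ℝ} [DecidableEq n] (hsym : Aᵀ = A) (v : n → ℝ) :
    v ᵥ* A = A *ᵥ v := by
  conv_lhs => rw [← hsym]
  exact Matrix.vecMul_transpose A v
end helpers

lemma xc_sum_zero (g p : ℕ) (hg : 1 ≤ g) (x : Fin g → Fin p → ℝ) :
    ∑ s : Fin g, xc g p x s = 0 := by
  have hg0 : (g : ℝ) ≠ 0 := Nat.cast_ne_zero.mpr (by omega)
  simp only [xc, Finset.sum_sub_distrib, Finset.sum_const, Finset.card_univ, Fintype.card_fin]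
  rw [← Nat.cast_smul_eq_nsmul ℝ, smul_smul, mul_inv_cancel₀ hg0, one_smul, sub_self]

lemma Dhat_symm (g p : ℕ) (x : Fin g → Fin p → ℝ) : (Dhat g p x)ᵀ = Dhat g p x := by
  simp only [Dhat, Matrix.transpose_smul, Matrix.transpose_sum, vecMulVec_transpose']

lemma Dhat_inv_symm (g p : ℕ) (x : Fin g → Fin p → ℝ) :
    ((Dhat g p x)⁻¹)ᵀ = (Dhat g p x)⁻¹ := by
  rw [Matrix.transpose_nonsing_inv, Dhat_symm]

lemma Hsum (g p : ℕ) (hg : 1 ≤ g) (x : Fin g → Fin p → ℝ)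
    (hD : IsUnit (Dhat g p x).det) (i i' : Fin g) :
    ∑ s : Fin g, Hhat g p x i s * Hhat g p x i' s = g * Hhat g p x i i' := by
  have hg0 : (g : ℝ) ≠ 0 := Nat.cast_ne_zero.mpr (by omega)
  set A := (Dhat g p x)⁻¹ with hA
  set c := xc g p x with hc
  have hsym : Aᵀ = A := Dhat_inv_symm g p x
  have hq : ∀ v w : Fin p → ℝ, v ⬝ᵥ (A *ᵥ w) = (A *ᵥ v) ⬝ᵥ w := by
    intro v w
    rw [dotProduct_mulVec, vecMul_eq_mulVec hsym]
  have hcross : ∀ v : Fin p → ℝ, ∑ s : Fin g, v ⬝ᵥ (A *ᵥ c s) = 0 := by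
    intro v
    have : ∀ s : Fin g, v ⬝ᵥ (A *ᵥ c s) = (A *ᵥ v) ⬝ᵥ c s := fun s => hq v (c s)
    simp_rw [this]
    rw [sum_dotProduct', hc, xc_sum_zero g p hg x, dotProduct_zero]
  have hquad : ∑ s : Fin g, (c i ⬝ᵥ (A *ᵥ c s)) * (c i' ⬝ᵥ (A *ᵥ c s))
      = (g : ℝ) * (c i ⬝ᵥ (A *ᵥ c i')) := by
    have h1 : ∀ s : Fin g, (c i ⬝ᵥ (A *ᵥ c s)) * (c i' ⬝ᵥ (A *ᵥ c s))
        = (A *ᵥ c i) ⬝ᵥ (vecMulVec (c s) (c s) *ᵥ (A *ᵥ c i')) := by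
      intro s
      rw [dot_vecMulVec_mulVec, hq (c i) (c s)]
      congr 1
      rw [hq (c i') (c s), dotProduct_comm]
    simp_rw [h1]
    rw [sum_dotProduct']
    have hsummv : ∑ s : Fin g, vecMulVec (c s) (c s) *ᵥ (A *ᵥ c i')
        = ((g : ℝ) • Dhat g p x) *ᵥ (A *ᵥ c i') := by
      have : (g : ℝ) • Dhat g p x = ∑ s : Fin g, vecMulVec (c s) (c s) := by
        rw [Dhat, smul_smul, mul_inv_cancel₀ hg0, one_smul]
      rw [this]
      funext j
      simp only [Matrix.mulVec, dotProduct, Finset.sum_apply, Matrix.sum_apply,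
        Finset.sum_mul]
      exact Finset.sum_comm
    rw [hsummv, Matrix.smul_mulVec, Matrix.mulVec_mulVec, Matrix.mul_nonsing_inv _ hD,
      Matrix.one_mulVec, dotProduct_smul, smul_eq_mul]
    congr 1
    exact (hq (c i) (c i')).symm
  simp only [Hhat, ← hA, ← hc]
  have expand : ∀ s : Fin g, (1 + c i ⬝ᵥ (A *ᵥ c s)) * (1 + c i' ⬝ᵥ (A *ᵥ c s))
      = 1 + c i ⬝ᵥ (A *ᵥ c s) + c i' ⬝ᵥ (A *ᵥ c s)
        + (c i ⬝ᵥ (A *ᵥ c s)) * (c i' ⬝ᵥ (A *ᵥ c s)) := fun s => by ring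
  simp_rw [expand]
  rw [Finset.sum_add_distrib, Finset.sum_add_distrib, Finset.sum_add_distrib,
    hcross (c i), hcross (c i'), hquad]
  simp only [Finset.sum_const, Finset.card_univ, Fintype.card_fin, nsmul_eq_mul, mul_one]
  ring

lemma integrable_mul_of_memL2 {Ω : Type*} [MeasureSpace Ω]
    [IsProbabilityMeasure (ℙ : Measure Ω)] {X Y : Ω → ℝ}
    (hX : MemLp X 2 ℙ) (hY : MemLp Y 2 ℙ) :
    Integrable (fun ω => X ω * Y ω) ℙ := by
  have h := (hY.smul (r := 1) hX).integrable le_rfl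
  exact h

lemma Cov_lincomb {Ω : Type*} [MeasureSpace Ω] [IsProbabilityMeasure (ℙ : Measure Ω)]
    {ι : Type*} [Fintype ι] [DecidableEq ι] (Z : ι → Ω → ℝ) (v : ι → ℝ)
    (hZ2 : ∀ k, MemLp (Z k) 2 ℙ)
    (hZ0 : ∀ k, ∫ ω, Z k ω = 0)
    (hZZ : ∀ k l, (∫ ω, Z k ω * Z l ω) = if k = l then v k else 0)
    (c d : ι → ℝ) :
    Cov (fun ω => ∑ k : ι, c k * Z k ω) (fun ω => ∑ k : ι, d k * Z k ω)
      = ∑ k : ι, c k * d k * v k := by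
  have hint : ∀ k l : ι, Integrable (fun ω => Z k ω * Z l ω) ℙ :=
    fun k l => integrable_mul_of_memL2 (hZ2 k) (hZ2 l)
  have h1 : (∫ ω, ∑ k : ι, c k * Z k ω) = 0 := by
    rw [integral_finset_sum _ (fun k _ => ((hZ2 k).integrable one_le_two).const_mul (c k))]
    simp [integral_const_mul, hZ0]
  have h2 : (∫ ω, ∑ k : ι, d k * Z k ω) = 0 := by
    rw [integral_finset_sum _ (fun k _ => ((hZ2 k).integrable one_le_two).const_mul (d k))]
    simp [integral_const_mul, hZ0]
  have hexp : ∀ ω : Ω, (∑ k : ι, c k * Z k ω) * (∑ l : ι, d l * Z l ω)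
      = ∑ k : ι, ∑ l : ι, (c k * d l) * (Z k ω * Z l ω) := by
    intro ω
    rw [Finset.sum_mul_sum]
    exact Finset.sum_congr rfl fun k _ => Finset.sum_congr rfl fun l _ => by ring
  have h3 : (∫ ω, (∑ k : ι, c k * Z k ω) * (∑ l : ι, d l * Z l ω))
      = ∑ k : ι, c k * d k * v k := by
    simp_rw [hexp]
    rw [integral_finset_sum _ (fun k _ =>
      integrable_finset_sum _ (fun l _ => ((hint k l).const_mul _)))]
    have : ∀ k : ι, (∫ ω, ∑ l : ι, (c k * d l) * (Z k ω * Z l ω)) = c k * d k * v k := by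
      intro k
      rw [integral_finset_sum _ (fun l _ => ((hint k l).const_mul _))]
      simp_rw [integral_const_mul, hZZ]
      simp [Finset.sum_ite_eq, mul_ite]
    simp_rw [this]
  simp only [Cov, h1, h2, h3, mul_zero, sub_zero]

/-- In the two-way crossed model with interaction, the row linear EBLUP-error terms
`T_i = γ̄_{i·} − g⁻¹ Σ_s Ĥ^{(a)}_{is} α_s` satisfy
`Cov(T_i, T_{i'}) = 𝟙{i=i'} σγ²/h + (σα²/g) Ĥ^{(a)}_{ii'}`; in particular
`Var(T_i) = σγ²/h + (σα²/g) Ĥ^{(a)}_{ii}`, the paper's MSE approximation for `α̂_i`. -/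
theorem row_eblup_error_covariance_interaction {Ω : Type*} [MeasureSpace Ω]
    [IsProbabilityMeasure (ℙ : Measure Ω)]
    (g h p : ℕ) (hg : 1 ≤ g) (hh : 1 ≤ h) (hp : 1 ≤ p)
    (x : Fin g → Fin p → ℝ) (hD : IsUnit (Dhat g p x).det)
    (σα2 σγ2 : ℝ) (hσα : 0 ≤ σα2) (hσγ : 0 ≤ σγ2)
    (α : Fin g → Ω → ℝ) (γ : Fin g × Fin h → Ω → ℝ)
    (hindep : iIndepFun (Sum.elim α γ) ℙ)
    (hαL2 : ∀ s, MemLp (α s) 2 ℙ) (hγL2 : ∀ ij, MemLp (γ ij) 2 ℙ)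
    (hα0 : ∀ s, ∫ ω, α s ω = 0) (hγ0 : ∀ ij, ∫ ω, γ ij ω = 0)
    (hαvar : ∀ s, Cov (α s) (α s) = σα2) (hγvar : ∀ ij, Cov (γ ij) (γ ij) = σγ2) :
    (∀ i i' : Fin g,
      Cov (fun ω => (h : ℝ)⁻¹ * ∑ j : Fin h, γ (i, j) ω
              - (g : ℝ)⁻¹ * ∑ s : Fin g, Hhat g p x i s * α s ω)
          (fun ω => (h : ℝ)⁻¹ * ∑ j : Fin h, γ (i', j) ω
              - (g : ℝ)⁻¹ * ∑ s : Fin g, Hhat g p x i' s * α s ω)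
        = (if i = i' then σγ2 / h else 0) + σα2 / g * Hhat g p x i i') ∧
    (∀ i : Fin g,
      Cov (fun ω => (h : ℝ)⁻¹ * ∑ j : Fin h, γ (i, j) ω
              - (g : ℝ)⁻¹ * ∑ s : Fin g, Hhat g p x i s * α s ω)
          (fun ω => (h : ℝ)⁻¹ * ∑ j : Fin h, γ (i, j) ω
              - (g : ℝ)⁻¹ * ∑ s : Fin g, Hhat g p x i s * α s ω)
        = σγ2 / h + σα2 / g * Hhat g p x i i) := by
  have hg0 : (g : ℝ) ≠ 0 := Nat.cast_ne_zero.mpr (by omega)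
  have hh0 : (h : ℝ) ≠ 0 := Nat.cast_ne_zero.mpr (by omega)
  set Z : (Fin g ⊕ Fin g × Fin h) → Ω → ℝ := Sum.elim α γ with hZ
  set v : (Fin g ⊕ Fin g × Fin h) → ℝ :=
    Sum.elim (fun _ => σα2) (fun _ => σγ2) with hv
  have hZ2 : ∀ k, MemLp (Z k) 2 ℙ := by
    rintro (s | ij)
    · exact hαL2 s
    · exact hγL2 ij
  have hZ0 : ∀ k, ∫ ω, Z k ω = 0 := by
    rintro (s | ij)
    · exact hα0 s
    · exact hγ0 ij
  have hZZ : ∀ k l, (∫ ω, Z k ω * Z l ω) = if k = l then v k else 0 := by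
    intro k l
    by_cases hkl : k = l
    · subst hkl
      simp only [if_pos rfl]
      have hvar : Cov (Z k) (Z k) = v k := by
        rcases k with s | ij
        · exact hαvar s
        · exact hγvar ij
      have := hvar
      simp only [Cov, hZ0 k, mul_zero, sub_zero] at this
      exact this
    · have hind : IndepFun (Z k) (Z l) ℙ := hindep.indepFun hkl
      have := hind.integral_mul_eq_mul_integral (hZ2 k).1
        (hZ2 l).1
      simp only [Pi.mul_apply] at this
      rw [if_neg hkl]
      calc (∫ ω, Z k ω * Z l ω) = (∫ ω, Z k ω) * ∫ ω, Z l ω := this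
        _ = 0 := by rw [hZ0 k, zero_mul]
  set c : Fin g → (Fin g ⊕ Fin g × Fin h) → ℝ := fun i =>
    Sum.elim (fun s => -((g : ℝ)⁻¹ * Hhat g p x i s))
      (fun sj => if sj.1 = i then (h : ℝ)⁻¹ else 0) with hcdef
  have hfun : ∀ i : Fin g,
      (fun ω => (h : ℝ)⁻¹ * ∑ j : Fin h, γ (i, j) ω
          - (g : ℝ)⁻¹ * ∑ s : Fin g, Hhat g p x i s * α s ω)
      = fun ω => ∑ k : Fin g ⊕ Fin g × Fin h, c i k * Z k ω := by
    intro i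
    funext ω
    rw [Fintype.sum_sum_type]
    have h2 : ∑ sj : Fin g × Fin h, c i (Sum.inr sj) * Z (Sum.inr sj) ω
        = (h : ℝ)⁻¹ * ∑ j : Fin h, γ (i, j) ω := by
      rw [Fintype.sum_prod_type]
      simp only [hcdef, hZ, Sum.elim_inr, ite_mul, zero_mul]
      rw [Finset.sum_comm]
      simp [Finset.sum_ite_eq', Finset.mul_sum]
    have h1 : ∑ s : Fin g, c i (Sum.inl s) * Z (Sum.inl s) ω
        = -((g : ℝ)⁻¹ * ∑ s : Fin g, Hhat g p x i s * α s ω) := by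
      simp [hcdef, hZ, Finset.mul_sum, mul_assoc]
    rw [h1, h2]
    ring
  have key : ∀ i i' : Fin g,
      Cov (fun ω => (h : ℝ)⁻¹ * ∑ j : Fin h, γ (i, j) ω
              - (g : ℝ)⁻¹ * ∑ s : Fin g, Hhat g p x i s * α s ω)
          (fun ω => (h : ℝ)⁻¹ * ∑ j : Fin h, γ (i', j) ω
              - (g : ℝ)⁻¹ * ∑ s : Fin g, Hhat g p x i' s * α s ω)
        = (if i = i' then σγ2 / h else 0) + σα2 / g * Hhat g p x i i' := by
    intro i i'
    rw [hfun i, hfun i', Cov_lincomb Z v hZ2 hZ0 hZZ (c i) (c i')]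
    rw [Fintype.sum_sum_type]
    have hinl : ∑ s : Fin g, c i (Sum.inl s) * c i' (Sum.inl s) * v (Sum.inl s)
        = σα2 / g * Hhat g p x i i' := by
      have : ∀ s : Fin g, c i (Sum.inl s) * c i' (Sum.inl s) * v (Sum.inl s)
          = ((g : ℝ)⁻¹ * (g : ℝ)⁻¹ * σα2) * (Hhat g p x i s * Hhat g p x i' s) := by
        intro s; simp only [hcdef, hv, Sum.elim_inl]; ring
      simp_rw [this]
      rw [← Finset.mul_sum, Hsum g p hg x hD i i']
      field_simp
    have hinr : ∑ sj : Fin g × Fin h, c i (Sum.inr sj) * c i' (Sum.inr sj) * v (Sum.inr sj)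
        = if i = i' then σγ2 / h else 0 := by
      rw [Fintype.sum_prod_type]
      simp only [hcdef, hv, Sum.elim_inr]
      by_cases hii : i = i'
      · subst hii
        simp [Finset.sum_ite_eq', ite_mul, zero_mul, Finset.sum_const, Fintype.card_fin]
        field_simp
      · rw [if_neg hii]
        apply Finset.sum_eq_zero
        intro s _
        apply Finset.sum_eq_zero
        intro j _
        by_cases hs : s = i
        · rw [if_pos hs, if_neg (by rw [hs]; exact hii), mul_zero, zero_mul]
        · rw [if_neg hs, zero_mul, zero_mul]
    rw [hinl, hinr]
    ring
  refine ⟨key, fun i => ?_⟩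
  have := key i i
  simpa using this
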